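/- Let n ≥ 3 be an integer, let u > 0 and let v_1,…,v_n be real numbers, and set α = u + v_1 + ⋯ + v_n and β = u² + v_1² + ⋯ + v_n². For a list of squared edge lengths (w_1,…,w_{n−1}) together with a common value w, let CM(w; w_1,…,w_{n−1}) denote the determinant of the (n+1)×(n+1) matrix with a bordering row and column of 1's (with 0 in the corner), with (0,0) entry 0, with (0,j) and (j,0) entries w_j for 1 ≤ j ≤ n−1, and with (i,j) entry equal to 0 if i = j and w otherwise for 1 ≤ i, j ≤ n−1. Then CM(u; u,…,u) = (−1)^n · n · u^(n−1), and for each j with 1 ≤ j ≤ n, CM(u; v_1,…,v_{j−1},v_{j+1},…,v_n) = (−u)^(n−3) · [ −α² + (n−1)β − n v_j² + 2α v_j ]. -/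

import Mathlib

/-- `CM n w ws` is the Cayley–Menger determinant of an `(n-1)`-simplex whose
squared edge lengths from the first vertex are `ws 1, …, ws (n-1)` and whose
remaining squared edge lengths all equal `w`.  The `(n+1) × (n+1)` matrix is
indexed by `Fin (n+1)`: index `0` is the bordering index (row and column of
`1`'s with `0` in the corner), index `1` is the first vertex, and indices
`2, …, n` are the vertices `1, …, n-1`. -/
noncomputable def CM (n : ℕ) (w : ℝ) (ws : ℕ → ℝ) : ℝ :=
  Matrix.det (Matrix.of fun i j : Fin (n + 1) =>
    if i.val = 0 then (if j.val = 0 then 0 else 1)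
    else if j.val = 0 then 1
    else if i.val = 1 then (if j.val = 1 then 0 else ws (j.val - 1))
    else if j.val = 1 then ws (i.val - 1)
    else if i = j then 0 else w)

open Matrix Finset

lemma CM_block (m : ℕ) (w : ℝ) (ws : ℕ → ℝ) :
    CM (m + 1) w ws =
      (Matrix.fromBlocks (!![0, 1; 1, 0])
        (Matrix.of fun (i : Fin 2) (k : Fin m) => if i = 0 then 1 else ws (k.val + 1))
        (Matrix.of fun (k : Fin m) (i : Fin 2) => if i = 0 then 1 else ws (k.val + 1))
        (Matrix.of fun (k l : Fin m) => if k = l then 0 else w)).det := by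
  let e : Fin 2 ⊕ Fin m ≃ Fin (m + 1 + 1) := finSumFinEquiv.trans (finCongr (by omega))
  rw [CM, ← Matrix.det_submatrix_equiv_self e]
  congr 1
  have h2 : ∀ k : Fin m, (e (Sum.inr k)).val = k.val + 2 := by
    intro k; simp [e, Fin.coe_cast]
  have hz : ∀ x, e x = 0 ↔ (e x).val = 0 := fun x => Fin.ext_iff
  ext x y
  rcases x with i | k <;> rcases y with j | l
  · fin_cases i <;> fin_cases j <;> rfl
  · fin_cases i <;>
      simp [Matrix.submatrix_apply, h2 l, show (e (Sum.inl 0)).val = 0 from rfl,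
        show (e (Sum.inl 1)).val = 1 from rfl, hz]
  · fin_cases j <;>
      simp [Matrix.submatrix_apply, h2 k, show (e (Sum.inl 0)).val = 0 from rfl,
        show (e (Sum.inl 1)).val = 1 from rfl, hz]
  · have hkl : e (Sum.inr k) = e (Sum.inr l) ↔ k = l := by
      rw [EmbeddingLike.apply_eq_iff_eq]; exact Sum.inr.injEq k l ▸ Iff.rfl
    simp [Matrix.submatrix_apply, h2 k, h2 l, hkl, hz]

lemma CM_formula (m : ℕ) (hm : 2 ≤ m) (w : ℝ) (hw : w ≠ 0) (ws : ℕ → ℝ) :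
    CM (m + 1) w ws = (-w) ^ (m - 2) *
      ((m : ℝ) * (w ^ 2 + ∑ k ∈ Finset.range m, ws (k + 1) ^ 2) -
        (w + ∑ k ∈ Finset.range m, ws (k + 1)) ^ 2) := by
  have hm1 : (m : ℝ) - 1 ≠ 0 := by
    have : (2 : ℝ) ≤ (m : ℝ) := by exact_mod_cast hm
    linarith
  set S := ∑ k ∈ Finset.range m, ws (k + 1) with hS
  set Q := ∑ k ∈ Finset.range m, ws (k + 1) ^ 2 with hQ
  set c : ℝ := 1 / ((m : ℝ) - 1) with hc
  set B : Matrix (Fin 2) (Fin m) ℝ :=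
    Matrix.of fun (i : Fin 2) (k : Fin m) => if i = 0 then 1 else ws (k.val + 1) with hB
  set C : Matrix (Fin m) (Fin 2) ℝ :=
    Matrix.of fun (k : Fin m) (i : Fin 2) => if i = 0 then 1 else ws (k.val + 1) with hC
  set D : Matrix (Fin m) (Fin m) ℝ :=
    Matrix.of fun (k l : Fin m) => if k = l then 0 else w with hD
  set E : Matrix (Fin m) (Fin m) ℝ :=
    Matrix.of fun k l : Fin m => (c - if k = l then 1 else 0)/w with hE
  -- left inverse
  have hED : E * D = 1 := by
    ext k j
    rw [Matrix.mul_apply]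
    simp only [hE, hD, Matrix.of_apply]
    have hterm : ∀ l : Fin m,
        ((c - if k = l then 1 else 0)/w) * (if l = j then 0 else w) =
        (c - if k = l then 1 else 0) -
          (if l = j then (c - if k = l then 1 else 0) else 0) := by
      intro l
      split_ifs with h1 h2 h2 <;> field_simp <;> ring
    rw [Finset.sum_congr rfl fun l _ => hterm l, Finset.sum_sub_distrib,
      Finset.sum_ite_eq' Finset.univ j, Finset.sum_sub_distrib, Finset.sum_const,
      Finset.sum_ite_eq Finset.univ k]
    simp only [Finset.mem_univ, if_true, Finset.card_univ, Fintype.card_fin, nsmul_eq_mul]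
    rcases eq_or_ne k j with rfl | hkj
    · simp only [Matrix.one_apply_eq, if_pos rfl]
      rw [hc]; field_simp; rw [if_pos trivial]; ring
    · rw [Matrix.one_apply_ne hkj, if_neg hkj]
      rw [hc]; field_simp; ring
  haveI : Invertible D := invertibleOfLeftInverse D E hED
  have hdetD : D.det = (-w)^m * (1 - (m : ℝ)) := by
    have hDf : D = (-w) • (1 + Matrix.replicateCol Unit (fun _ : Fin m => (-1 : ℝ)) *
        Matrix.replicateRow Unit (fun _ : Fin m => (1:ℝ))) := by
      ext k l
      rcases eq_or_ne k l with rfl | h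
      · simp [hD, Matrix.mul_apply, Matrix.one_apply]
      · simp [hD, Matrix.mul_apply, Matrix.one_apply, h]
    rw [hDf, Matrix.det_smul, Matrix.det_one_add_replicateCol_mul_replicateRow]
    have hd : (fun _ : Fin m => (1:ℝ)) ⬝ᵥ (fun _ : Fin m => (-1:ℝ)) = -(m:ℝ) := by
      simp [dotProduct]
    rw [hd, Fintype.card_fin]
    ring
  rw [CM_block, ← hB, ← hC, ← hD, Matrix.det_fromBlocks₂₂, invOf_eq_left_inv hED, hdetD]
  -- sums of rows of B
  have hBsum : ∀ i : Fin 2, ∑ l : Fin m, B i l = if i = 0 then (m : ℝ) else S := by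
    intro i
    rcases eq_or_ne i 0 with rfl | hi
    · rw [if_pos rfl]; simp [hB]
    · rw [if_neg hi]
      have hb : ∀ l : Fin m, B i l = ws (l.val + 1) := fun l => by
        simp only [hB, Matrix.of_apply, if_neg hi]
      simp only [hb]
      rw [hS, ← Fin.sum_univ_eq_sum_range (fun k => ws (k + 1)) m]
  have hCsum : ∀ j : Fin 2, ∑ k : Fin m, C k j = if j = 0 then (m : ℝ) else S := by
    intro j
    rcases eq_or_ne j 0 with rfl | hj
    · rw [if_pos rfl]; simp [hC]
    · rw [if_neg hj]
      have hb : ∀ l : Fin m, C l j = ws (l.val + 1) := fun l => by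
        simp only [hC, Matrix.of_apply, if_neg hj]
      simp only [hb]
      rw [hS, ← Fin.sum_univ_eq_sum_range (fun k => ws (k + 1)) m]
  have hBCsum : ∀ i j : Fin 2, ∑ k : Fin m, B i k * C k j =
      (if i = 0 then (if j = 0 then (m : ℝ) else S) else (if j = 0 then S else Q)) := by
    intro i j
    rcases eq_or_ne i 0 with rfl | hi <;> rcases eq_or_ne j 0 with rfl | hj
    · simp [hB, hC]
    · rw [if_pos rfl, if_neg hj]
      have hb : ∀ k : Fin m, B 0 k * C k j = ws (k.val + 1) := fun k => by
        simp only [hB, hC, Matrix.of_apply, if_pos rfl, if_neg hj, if_true, one_mul]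
      simp only [hb]
      rw [hS, ← Fin.sum_univ_eq_sum_range (fun k => ws (k + 1)) m]
    · rw [if_neg hi, if_pos rfl]
      have hb : ∀ k : Fin m, B i k * C k 0 = ws (k.val + 1) := fun k => by
        simp only [hB, hC, Matrix.of_apply, if_neg hi, if_pos rfl, if_true, mul_one]
      simp only [hb]
      rw [hS, ← Fin.sum_univ_eq_sum_range (fun k => ws (k + 1)) m]
    · rw [if_neg hi, if_neg hj]
      have hb : ∀ k : Fin m, B i k * C k j = ws (k.val + 1) ^ 2 := fun k => by
        simp only [hB, hC, Matrix.of_apply, if_neg hi, if_neg hj]; ring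
      simp only [hb]
      rw [hQ, ← Fin.sum_univ_eq_sum_range (fun k => ws (k + 1) ^ 2) m]
  -- B * E entries
  have hBE : ∀ (i : Fin 2) (k : Fin m),
      (B * E) i k = (c * (if i = 0 then (m : ℝ) else S) - B i k)/w := by
    intro i k
    rw [Matrix.mul_apply]
    have hterm : ∀ l : Fin m, B i l * E l k =
        B i l * c / w - (if l = k then B i l / w else 0) := by
      intro l
      simp only [hE, Matrix.of_apply]
      split_ifs with h1 <;> field_simp <;> ring
    rw [Finset.sum_congr rfl fun l _ => hterm l, Finset.sum_sub_distrib,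
      Finset.sum_ite_eq' Finset.univ k]
    simp only [Finset.mem_univ, if_true]
    rw [← Finset.sum_div, ← Finset.sum_mul, hBsum i]
    ring
  -- B * E * C entries
  have hBEC : ∀ (i j : Fin 2), (B * E * C) i j =
      (c * (if i = 0 then (m : ℝ) else S) * (if j = 0 then (m : ℝ) else S) -
        (if i = 0 then (if j = 0 then (m : ℝ) else S) else (if j = 0 then S else Q)))/w := by
    intro i j
    rw [Matrix.mul_apply]
    have hterm : ∀ k : Fin m, (B * E) i k * C k j =
        (c * (if i = 0 then (m : ℝ) else S) * C k j - B i k * C k j)/w := by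
      intro k
      rw [hBE i k]
      ring
    rw [Finset.sum_congr rfl fun k _ => hterm k, ← Finset.sum_div, Finset.sum_sub_distrib,
      ← Finset.mul_sum, hCsum j, hBCsum i j]
  -- the 2×2 determinant
  rw [Matrix.det_fin_two]
  simp only [Matrix.sub_apply, hBEC]
  have hA00 : (!![(0:ℝ), 1; 1, 0]) 0 0 = 0 := rfl
  have hA01 : (!![(0:ℝ), 1; 1, 0]) 0 1 = 1 := rfl
  have hA10 : (!![(0:ℝ), 1; 1, 0]) 1 0 = 1 := rfl
  have hA11 : (!![(0:ℝ), 1; 1, 0]) 1 1 = 0 := rfl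
  rw [hA00, hA01, hA10, hA11]
  simp only [if_pos rfl, if_neg (by decide : ¬(1 : Fin 2) = 0)]
  -- final scalar identity
  obtain ⟨p, rfl⟩ : ∃ p, m = p + 2 := ⟨m - 2, by omega⟩
  have hpow : (-w) ^ (p + 2) = (-w) ^ p * w ^ 2 := by rw [pow_add]; ring
  rw [show p + 2 - 2 = p from rfl, hpow, hc]
  push_cast
  push_cast at hm1
  field_simp
  ring



/-- Formulas for the Cayley–Menger determinants of the facets of the
`n`-pre-kite `PK[n; u; v₁,…,vₙ]`:  the `0`-th facet is the regular
`(n-1)`-simplex with all squared edge lengths `u`, and the `j`-th facet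
(for `1 ≤ j ≤ n`) has edge-length data `(u; v₁,…,v_{j-1},v_{j+1},…,vₙ)`. -/
theorem stmt_3 (n : ℕ) (hn : 3 ≤ n) (u : ℝ) (hu : 0 < u) (v : ℕ → ℝ)
    (α β : ℝ)
    (hα : α = u + ∑ j ∈ Finset.Icc 1 n, v j)
    (hβ : β = u ^ 2 + ∑ j ∈ Finset.Icc 1 n, v j ^ 2) :
    CM n u (fun _ => u) = (-1) ^ n * n * u ^ (n - 1) ∧
    ∀ j, 1 ≤ j → j ≤ n →
      CM n u (fun k => if k < j then v k else v (k + 1)) =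
        (-u) ^ (n - 3) *
          (-α ^ 2 + ((n : ℝ) - 1) * β - (n : ℝ) * v j ^ 2 + 2 * α * v j) := by
  obtain ⟨m, rfl⟩ : ∃ m, n = m + 1 := ⟨n - 1, by omega⟩
  have hm : 2 ≤ m := by omega
  have hu' : u ≠ 0 := ne_of_gt hu
  constructor
  · rw [CM_formula m hm u hu']
    simp only [Finset.sum_const, Finset.card_range, nsmul_eq_mul]
    obtain ⟨p, rfl⟩ : ∃ p, m = p + 2 := ⟨m - 2, by omega⟩
    rw [show p + 2 - 2 = p from by omega, show p + 2 + 1 - 1 = p + 2 from by omega,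
      show p + 2 + 1 = p + 3 from by omega, neg_pow u p, pow_add ((-1 : ℝ)) p 3,
      pow_add u p 2]
    push_cast
    ring
  · intro j hj1 hj2
    rw [CM_formula m hm u hu']
    have key : ∀ F : ℕ → ℝ, ∑ k ∈ Finset.range m, F (if k + 1 < j then k + 1 else k + 2)
        = (∑ k ∈ Finset.Icc 1 (m + 1), F k) - F j := by
      intro F
      have h1 : ∑ k ∈ Finset.range m, F (if k + 1 < j then k + 1 else k + 2)
          = ∑ k ∈ (Finset.Icc 1 (m + 1)).erase j, F k := by
        refine Finset.sum_bij' (fun a _ => if a + 1 < j then a + 1 else a + 2)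
          (fun b _ => if b < j then b - 1 else b - 2) ?_ ?_ ?_ ?_ ?_
        · intro a ha
          simp only [Finset.mem_range] at ha
          simp only [Finset.mem_erase, Finset.mem_Icc]
          split_ifs <;> omega
        · intro b hb
          simp only [Finset.mem_erase, Finset.mem_Icc] at hb
          simp only [Finset.mem_range]
          split_ifs <;> omega
        · intro a ha
          simp only [Finset.mem_range] at ha
          split_ifs <;> omega
        · intro b hb
          simp only [Finset.mem_erase, Finset.mem_Icc] at hb
          split_ifs <;> omega
        · intro a ha
          rfl
      rw [h1, eq_sub_iff_add_eq, Finset.sum_erase_add]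
      simp only [Finset.mem_Icc]
      omega
    have hsum1 : ∑ k ∈ Finset.range m,
        (if k + 1 < j then v (k + 1) else v (k + 1 + 1)) = α - u - v j :=
      calc ∑ k ∈ Finset.range m, (if k + 1 < j then v (k + 1) else v (k + 1 + 1))
          = ∑ k ∈ Finset.range m, v (if k + 1 < j then k + 1 else k + 2) :=
            Finset.sum_congr rfl fun k _ => by split_ifs <;> rfl
        _ = (∑ k ∈ Finset.Icc 1 (m + 1), v k) - v j := key v
        _ = α - u - v j := by rw [hα]; ring
    have hsum2 : ∑ k ∈ Finset.range m,
        (if k + 1 < j then v (k + 1) else v (k + 1 + 1)) ^ 2 = β - u ^ 2 - v j ^ 2 :=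
      calc ∑ k ∈ Finset.range m, (if k + 1 < j then v (k + 1) else v (k + 1 + 1)) ^ 2
          = ∑ k ∈ Finset.range m, (fun x => v x ^ 2) (if k + 1 < j then k + 1 else k + 2) :=
            Finset.sum_congr rfl fun k _ => by dsimp only; split_ifs <;> rfl
        _ = (∑ k ∈ Finset.Icc 1 (m + 1), (fun x => v x ^ 2) k) - (fun x => v x ^ 2) j :=
            key (fun x => v x ^ 2)
        _ = β - u ^ 2 - v j ^ 2 := by dsimp only; rw [hβ]; ring
    simp only [hsum1, hsum2]
    rw [show m + 1 - 3 = m - 2 from by omega]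
    push_cast
    ring
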